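/- arXiv:2410.09558 — 4 statements merged into one kernel-verified Lean document; each statement's English description precedes it below -/
import Mathlib

section
/- For any positive integer κ, the sum over k1, k2 ≥ 1 with lcm(k1,k2) = κ and gcd(k1,k2) > 1 of Λ(k1)Λ(k2)/lcm(k1,k2) equals (2·log κ − Λ(κ))·Λ(κ)/κ, where Λ is the von Mangoldt function. -/
private lemma lcm_pow_aux (p a b : ℕ) : Nat.lcm (p^a) (p^b) = p^(max a b) := by
  rcases le_total a b with h | h
  · rw [max_eq_right h]
    exact Nat.dvd_antisymm (Nat.lcm_dvd (pow_dvd_pow p h) dvd_rfl) (Nat.dvd_lcm_right _ _)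
  · rw [max_eq_left h]
    exact Nat.dvd_antisymm (Nat.lcm_dvd dvd_rfl (pow_dvd_pow p h)) (Nat.dvd_lcm_left _ _)

open ArithmeticFunction in
theorem stmt_1 (κ : ℕ) (hκ : 1 ≤ κ) :
    ∑ q ∈ (Finset.Icc 1 κ ×ˢ Finset.Icc 1 κ).filter
        (fun q => Nat.lcm q.1 q.2 = κ ∧ 1 < Nat.gcd q.1 q.2),
      Λ q.1 * Λ q.2 / (Nat.lcm q.1 q.2 : ℝ)
      = (2 * Real.log κ - Λ κ) * Λ κ / κ := by
  by_cases hpp : IsPrimePow κ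
  · obtain ⟨p, m, hp, hm, rfl⟩ := hpp
    rw [← Nat.prime_iff] at hp
    have hp2 : 2 ≤ p := hp.two_le
    have hπ : ∀ a, 1 ≤ a → Λ (p ^ a) = Real.log p := fun a ha => by
      rw [vonMangoldt_apply_pow (by omega), vonMangoldt_apply_prime hp]
    -- characterize the filter set
    have hset : (Finset.Icc 1 (p^m) ×ˢ Finset.Icc 1 (p^m)).filter
        (fun q => Nat.lcm q.1 q.2 = p^m ∧ 1 < Nat.gcd q.1 q.2)
        = ((Finset.Icc 1 m ×ˢ Finset.Icc 1 m).filter (fun ab => max ab.1 ab.2 = m)).image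
          (fun ab => (p^ab.1, p^ab.2)) := by
      ext ⟨q1, q2⟩
      simp only [Finset.mem_filter, Finset.mem_image, Finset.mem_product, Finset.mem_Icc]
      constructor
      · rintro ⟨⟨⟨h11, h12⟩, ⟨h21, h22⟩⟩, hlcm, hgcd⟩
        have hd1 : q1 ∣ p ^ m := hlcm ▸ Nat.dvd_lcm_left _ _
        have hd2 : q2 ∣ p ^ m := hlcm ▸ Nat.dvd_lcm_right _ _
        obtain ⟨a, ha, rfl⟩ := (Nat.dvd_prime_pow hp).1 hd1
        obtain ⟨b, hb, rfl⟩ := (Nat.dvd_prime_pow hp).1 hd2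
        have ha1 : 1 ≤ a := by
          by_contra h
          have : a = 0 := by omega
          subst this
          simp [Nat.gcd_comm] at hgcd
        have hb1 : 1 ≤ b := by
          by_contra h
          have : b = 0 := by omega
          subst this
          simp at hgcd
        refine ⟨⟨a, b⟩, ⟨⟨⟨ha1, ha⟩, hb1, hb⟩, ?_⟩, rfl⟩
        rw [lcm_pow_aux] at hlcm
        exact Nat.pow_right_injective hp2 hlcm
      · rintro ⟨⟨a, b⟩, ⟨⟨⟨ha1, ha2⟩, hb1, hb2⟩, hmax⟩, heq⟩
        simp only [Prod.mk.injEq] at heq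
        obtain ⟨rfl, rfl⟩ := heq
        have hple : ∀ c, c ≤ m → p ^ c ≤ p ^ m := fun c hc =>
          Nat.pow_le_pow_right (by omega) hc
        refine ⟨⟨⟨Nat.one_le_pow _ _ (by omega), hple a ha2⟩,
          Nat.one_le_pow _ _ (by omega), hple b hb2⟩, ?_, ?_⟩
        · rw [lcm_pow_aux, hmax]
        · calc 1 < p := by omega
            _ ≤ Nat.gcd (p^a) (p^b) := Nat.le_of_dvd
              (Nat.gcd_pos_of_pos_left _ (Nat.pow_pos (by omega)))
              (Nat.dvd_gcd (dvd_pow_self p (by omega)) (dvd_pow_self p (by omega)))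
    rw [hset, Finset.sum_image]
    · have hterm : ∀ ab ∈ (Finset.Icc 1 m ×ˢ Finset.Icc 1 m).filter
          (fun ab => max ab.1 ab.2 = m),
          Λ ((fun ab : ℕ × ℕ => (p^ab.1, p^ab.2)) ab).1 *
            Λ ((fun ab : ℕ × ℕ => (p^ab.1, p^ab.2)) ab).2 /
            (Nat.lcm ((fun ab : ℕ × ℕ => (p^ab.1, p^ab.2)) ab).1
              ((fun ab : ℕ × ℕ => (p^ab.1, p^ab.2)) ab).2 : ℝ)
          = Real.log p * Real.log p / (p ^ m : ℕ) := by
        rintro ⟨a, b⟩ hab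
        simp only [Finset.mem_filter, Finset.mem_product, Finset.mem_Icc] at hab
        obtain ⟨⟨⟨ha1, _⟩, hb1, _⟩, hmax⟩ := hab
        simp only []
        rw [hπ a ha1, hπ b hb1, lcm_pow_aux, hmax]
      rw [Finset.sum_congr rfl hterm, Finset.sum_const]
      -- card computation
      have hcard : ((Finset.Icc 1 m ×ˢ Finset.Icc 1 m).filter
          (fun ab => max ab.1 ab.2 = m)).card = 2 * m - 1 := by
        have : (Finset.Icc 1 m ×ˢ Finset.Icc 1 m).filter (fun ab => max ab.1 ab.2 = m)
            = (Finset.Icc 1 m ×ˢ Finset.Icc 1 m) \ (Finset.Icc 1 (m-1) ×ˢ Finset.Icc 1 (m-1)) := by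
          ext ⟨a, b⟩
          simp only [Finset.mem_filter, Finset.mem_sdiff, Finset.mem_product, Finset.mem_Icc]
          omega
        rw [this, Finset.card_sdiff_of_subset]
        · simp only [Finset.card_product, Nat.card_Icc]
          obtain ⟨k, rfl⟩ : ∃ k, m = k + 1 := ⟨m - 1, by omega⟩
          have hk : (k+1)*(k+1) = k*k + (2*k+1) := by ring
          simp only [Nat.add_sub_cancel]
          rw [hk, Nat.add_sub_cancel_left]
          omega
        · intro q hq
          simp only [Finset.mem_product, Finset.mem_Icc] at hq ⊢
          omega
      rw [hcard, hπ m hm, nsmul_eq_mul]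
      push_cast [Nat.cast_sub (by omega : 1 ≤ 2*m)]
      rw [Real.log_pow]
      have hP : ((p:ℝ))^m ≠ 0 := by positivity
      field_simp
    · rintro ⟨a, b⟩ ha ⟨c, d⟩ hc h
      simp only [Prod.mk.injEq] at h ⊢
      exact ⟨Nat.pow_right_injective hp2 h.1, Nat.pow_right_injective hp2 h.2⟩
  · have hΛ : Λ κ = 0 := by
      by_contra h
      exact hpp (ArithmeticFunction.vonMangoldt_ne_zero_iff.1 h)
    rw [hΛ]
    rw [Finset.sum_eq_zero]
    · ring
    rintro ⟨q1, q2⟩ hq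
    simp only [Finset.mem_filter, Finset.mem_product, Finset.mem_Icc] at hq
    obtain ⟨_, hlcm, hgcd⟩ := hq
    by_cases h1 : Λ q1 = 0
    · simp [h1]
    by_cases h2 : Λ q2 = 0
    · simp [h2]
    exfalso
    obtain ⟨p, a, hp, ha, rfl⟩ := ArithmeticFunction.vonMangoldt_ne_zero_iff.1 h1
    obtain ⟨r, b, hr, hb, rfl⟩ := ArithmeticFunction.vonMangoldt_ne_zero_iff.1 h2
    obtain ⟨t, ht, htdvd⟩ := Nat.exists_prime_and_dvd (by omega : Nat.gcd (p^a) (r^b) ≠ 1)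
    have htp : t = p := by
      have := ht.dvd_of_dvd_pow (htdvd.trans (Nat.gcd_dvd_left _ _))
      exact (Nat.prime_dvd_prime_iff_eq ht hp.nat_prime).1 this
    have htr : t = r := by
      have := ht.dvd_of_dvd_pow (htdvd.trans (Nat.gcd_dvd_right _ _))
      exact (Nat.prime_dvd_prime_iff_eq ht hr.nat_prime).1 this
    subst htp
    rw [← htr] at hlcm
    rw [lcm_pow_aux] at hlcm
    exact hpp ⟨t, max a b, hp, by omega, hlcm⟩
end

section
/- For an integer n with n > |b| and −b not a perfect square, n² + b has a primitive divisor in the sequence (m² + b)_{m≥1} if and only if the largest prime factor of n² + b exceeds 2n. (A primitive divisor of A_n is an integer d > 1 with d ∣ A_n and gcd(d, A_m) = 1 for all nonzero A_m with m < n.) -/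
theorem stmt_9 (b n : ℤ) (hb : ¬ ∃ s : ℤ, s * s = -b) (hn : |b| < n) :
    (∃ d : ℤ, 1 < d ∧ d ∣ n ^ 2 + b ∧
        ∀ m : ℤ, 1 ≤ m → m < n → m ^ 2 + b ≠ 0 → IsCoprime d (m ^ 2 + b))
      ↔ ∃ p : ℕ, p.Prime ∧ (p : ℤ) ∣ n ^ 2 + b ∧ 2 * n < (p : ℤ) := by
  have hb0 : 0 ≤ |b| := abs_nonneg b
  have hbabs := abs_lt.mp hn
  have hn1 : 1 ≤ n := by linarith
  have hA0 : ∀ m : ℤ, m ^ 2 + b ≠ 0 := by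
    intro m hm
    exact hb ⟨m, by nlinarith⟩
  have hn2 : 2 ≤ n := by
    rcases lt_or_ge 1 n with h | h
    · linarith
    · exfalso
      have hne : n = 1 := le_antisymm h hn1
      have hb' : b = 0 := by omega
      exact hb ⟨0, by simp [hb']⟩
  constructor
  · rintro ⟨d, hd1, hdd, hcop⟩
    have hdne : d.natAbs ≠ 1 := by omega
    obtain ⟨p, hp, hpd⟩ := Int.exists_prime_and_dvd hdne
    set q := p.natAbs with hq_def
    have hq : q.Prime := Int.prime_iff_natAbs_prime.mp hp
    have hqd : (q : ℤ) ∣ d := Int.natAbs_dvd.mpr hpd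
    have hqA : (q : ℤ) ∣ n ^ 2 + b := hqd.trans hdd
    refine ⟨q, hq, hqA, ?_⟩
    by_contra hle
    push_neg at hle
    set P : ℤ := (q : ℤ) with hP_def
    have hP1 : 1 < P := by rw [hP_def]; exact_mod_cast hq.one_lt
    have key : ∀ m : ℤ, P ∣ (n - m) * (n + m) → P ∣ m ^ 2 + b := by
      intro m h
      have he : m ^ 2 + b = (n ^ 2 + b) - (n - m) * (n + m) := by ring
      rw [he]; exact dvd_sub hqA h
    obtain ⟨m, hm1, hmn, hPm⟩ : ∃ m : ℤ, 1 ≤ m ∧ m < n ∧ P ∣ m ^ 2 + b := by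
      set r := n % P with hr_def
      have hr0 : 0 ≤ r := Int.emod_nonneg n (by linarith)
      have hrP : r < P := Int.emod_lt_of_pos n (by linarith)
      have hdvd : P ∣ n - r := Int.dvd_self_sub_of_emod_eq rfl
      have hPr : P ∣ r ^ 2 + b := key r (hdvd.mul_right (n + r))
      rcases eq_or_lt_of_le hr0 with hr | hr
      · -- r = 0, so P ∣ n
        have hPn : P ∣ n := by
          have := hdvd; rw [← hr, sub_zero] at this; exact this
        have hPn2 : P ∣ n ^ 2 := dvd_pow hPn two_ne_zero
        have hPb : P ∣ b := by
          have he : b = (n ^ 2 + b) - n ^ 2 := by ring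
          rw [he]; exact dvd_sub hqA hPn2
        have hPlen : P ≤ n := Int.le_of_dvd (by linarith) hPn
        have hPltn : P < n := by
          rcases eq_or_lt_of_le hPlen with h | h
          · exfalso
            have hb' : b = 0 := Int.eq_zero_of_abs_lt_dvd hPb (h ▸ hn)
            exact hb ⟨0, by simp [hb']⟩
          · exact h
        refine ⟨P, by linarith, hPltn, ?_⟩
        exact dvd_add (dvd_pow (dvd_refl P) two_ne_zero) hPb
      · rcases lt_or_ge r n with hrn | hrn
        · exact ⟨r, hr, hrn, hPr⟩
        · -- r ≥ n, so r = n and n < P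
          have hreq : r = n := by
            have habs : |n - r| < P := by
              rw [abs_sub_comm, abs_of_nonneg (by linarith)]
              linarith
            have := Int.eq_zero_of_abs_lt_dvd hdvd habs
            linarith
          have hnP : n < P := hreq ▸ hrP
          have hPne : P ≠ 2 * n := by
            intro h
            have h2 : (2 : ℤ) ∣ P := ⟨n, h⟩
            have h2q : 2 ∣ q := by rw [hP_def] at h2; exact_mod_cast h2
            have h2eq := (Nat.Prime.eq_one_or_self_of_dvd hq 2 h2q).resolve_left (by norm_num)
            have hPe : P = 2 := by rw [hP_def, ← h2eq]; norm_num
            omega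
          have hPlt : P < 2 * n := lt_of_le_of_ne hle hPne
          refine ⟨P - n, by linarith, by linarith, ?_⟩
          apply key
          have hne : n + (P - n) = P := by ring
          rw [hne]
          exact Dvd.dvd.mul_left (dvd_refl P) _
    have cop := hcop m hm1 hmn (hA0 m)
    have hu : IsUnit P := cop.isUnit_of_dvd' hqd hPm
    exact (Int.prime_iff_natAbs_prime.mpr (by simpa [hP_def] using hq)).not_isUnit hu
  · rintro ⟨p, hp, hpd, hlt⟩
    have hpZ : Prime (p : ℤ) := Nat.prime_iff_prime_int.mp hp
    refine ⟨(p : ℤ), by exact_mod_cast hp.one_lt, hpd, ?_⟩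
    intro m hm1 hmn _
    have hnd : ¬ (p : ℤ) ∣ m ^ 2 + b := by
      intro h
      have hd : (p : ℤ) ∣ (n - m) * (n + m) := by
        have he : (n - m) * (n + m) = (n ^ 2 + b) - (m ^ 2 + b) := by ring
        rw [he]; exact dvd_sub hpd h
      rcases hpZ.dvd_mul.mp hd with h' | h'
      · have := Int.le_of_dvd (by linarith) h'
        linarith
      · have := Int.le_of_dvd (by linarith) h'
        linarith
    rw [Int.isCoprime_iff_nat_coprime]
    rw [Int.natAbs_natCast]
    refine (Nat.Prime.coprime_iff_not_dvd hp).mpr ?_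
    intro h
    exact hnd (Int.dvd_natAbs.mp (Int.natCast_dvd_natCast.mpr h))
end

section
/- Let K be a number field, α ∈ K, and let 𝔞 be the ideal denominator of the fractional ideal (α). Let 𝔭 be a prime ideal of K of degree one lying over the rational prime p which is unramified (𝔭² ∤ (p)), and let v ≥ 1. If 𝔭^v divides both (m+α)𝔞 and (n+α)𝔞 for integers m, n, then m ≡ n (mod p^v). -/
open NumberField

theorem stmt_12 (K : Type*) [Field K] [NumberField K] (α : K)
    (𝔞 : Ideal (𝓞 K))
    (h𝔞 : ∀ x : 𝓞 K, x ∈ 𝔞 ↔ ∃ y : 𝓞 K, (x : K) * α = (y : K))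
    (J : ℤ → Ideal (𝓞 K))
    (hJ : ∀ n : ℤ, J n = Ideal.span {x : 𝓞 K | ∃ a ∈ 𝔞, (x : K) = ((n : K) + α) * (a : K)})
    (𝔭 : Ideal (𝓞 K)) (h𝔭 : 𝔭.IsPrime) (h𝔭bot : 𝔭 ≠ ⊥)
    (p : ℕ) (hp : p.Prime) (hdeg1 : Ideal.absNorm 𝔭 = p)
    (hunram : ¬ (𝔭 ^ 2 ∣ Ideal.span {(p : 𝓞 K)}))
    (v : ℕ) (hv : 1 ≤ v) (m n : ℤ)
    (hm : 𝔭 ^ v ∣ J m) (hn : 𝔭 ^ v ∣ J n) :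
    (p : ℤ) ^ v ∣ m - n := by
  classical
  have hPprime : Prime 𝔭 := Ideal.prime_of_isPrime h𝔭bot h𝔭
  have h𝔭ne0 : 𝔭 ≠ 0 := h𝔭bot
  -- `p ∈ 𝔭`
  have hpmem : (p : 𝓞 K) ∈ 𝔭 := by
    have := Ideal.absNorm_mem 𝔭
    rwa [hdeg1] at this
  -- lying over : integers in `𝔭` are divisible by `p`
  have hlo : ∀ z : ℤ, (z : 𝓞 K) ∈ 𝔭 → (p : ℤ) ∣ z := by
    intro z hz
    by_contra hpz
    have hpz' : ¬ p ∣ z.natAbs := fun h =>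
      hpz (Int.natAbs_dvd_natAbs.mp (by simpa using h))
    have hcop : IsCoprime (p : ℤ) z := by
      rw [Int.isCoprime_iff_gcd_eq_one]
      simpa [Int.gcd] using (hp.coprime_iff_not_dvd.mpr hpz')
    obtain ⟨u, w, huw⟩ := hcop
    have h1 : ((u * (p:ℤ) + w * z : ℤ) : 𝓞 K) ∈ 𝔭 := by
      push_cast
      exact Ideal.add_mem _ (Ideal.mul_mem_left _ _ hpmem) (Ideal.mul_mem_left _ _ hz)
    rw [huw] at h1
    exact h𝔭.ne_top ((Ideal.eq_top_iff_one _).mpr (by exact_mod_cast h1))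
  -- generators of `J k`
  have hgen : ∀ (k : ℤ) (a : 𝓞 K), a ∈ 𝔞 → ∀ y : 𝓞 K, (a : K) * α = (y : K) →
      ((k : 𝓞 K) * a + y) ∈ J k := by
    intro k a ha y hy
    rw [hJ k]
    apply Ideal.subset_span
    refine ⟨a, ha, ?_⟩
    have hy' : (algebraMap (𝓞 K) K a) * α = algebraMap (𝓞 K) K y := hy
    show algebraMap (𝓞 K) K ((k : 𝓞 K) * a + y) = ((k : K) + α) * algebraMap (𝓞 K) K a
    rw [map_add, map_mul, map_intCast, ← hy']
    ring
  have hJm_le : J m ≤ 𝔭 ^ v := Ideal.le_of_dvd hm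
  have h𝔭v_le : 𝔭 ^ v ≤ 𝔭 := Ideal.pow_le_self (by omega)
  -- `𝔞` is nonzero
  have h𝔞ne : 𝔞 ≠ ⊥ := by
    obtain ⟨⟨num, den⟩, hsurj⟩ := IsLocalization.surj (nonZeroDivisors (𝓞 K)) α
    have hden : (den : 𝓞 K) ∈ 𝔞 := (h𝔞 _).mpr ⟨num, by
      rw [RingOfIntegers.coe_eq_algebraMap, RingOfIntegers.coe_eq_algebraMap, mul_comm]
      exact hsurj⟩
    intro hbot
    rw [hbot, Ideal.mem_bot] at hden
    exact nonZeroDivisors.coe_ne_zero den hden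
  -- `𝔭` does not divide `𝔞`
  have hAnotle : ¬ 𝔞 ≤ 𝔭 := by
    intro hle
    obtain ⟨𝔠, h𝔠⟩ : 𝔭 ∣ 𝔞 := Ideal.dvd_iff_le.mpr hle
    have h𝔠ne : 𝔠 ≠ 0 := by
      rintro rfl
      rw [mul_zero] at h𝔠
      exact h𝔞ne h𝔠
    have key : 𝔠 ≤ 𝔞 := by
      intro x hx
      rw [h𝔞]
      set β : K := (x : K) * α with hβ
      have hy : ∀ t ∈ 𝔭, ∃ y ∈ 𝔭, β * (t : K) = (y : K) := by
        intro t ht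
        have hxt : x * t ∈ 𝔞 := by
          rw [h𝔠, mul_comm x t]
          exact Ideal.mul_mem_mul ht hx
        obtain ⟨y, hyeq⟩ := (h𝔞 (x * t)).mp hxt
        refine ⟨y, ?_, ?_⟩
        · have h1 : ((m : 𝓞 K) * (x * t) + y) ∈ J m := hgen m (x * t) hxt y hyeq
          have h2 : ((m : 𝓞 K) * (x * t) + y) ∈ 𝔭 := h𝔭v_le (hJm_le h1)
          have h3 : ((m : 𝓞 K) * (x * t)) ∈ 𝔭 := Ideal.mul_mem_left _ _ (hle hxt)
          have h4 := Ideal.sub_mem _ h2 h3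
          simpa using h4
        · rw [← hyeq]
          push_cast
          ring
      set N : Submodule (𝓞 K) K := Submodule.map (Algebra.linearMap (𝓞 K) K) 𝔭 with hN
      have hN_ne : N ≠ ⊥ := by
        obtain ⟨t, ht, htne⟩ := (Submodule.ne_bot_iff 𝔭).mp h𝔭bot
        rw [Submodule.ne_bot_iff]
        exact ⟨algebraMap (𝓞 K) K t, ⟨t, ht, rfl⟩, by
          simpa [RingOfIntegers.coe_eq_zero_iff] using htne⟩
      have hN_fg : N.FG := Submodule.FG.map _ (IsNoetherian.noetherian 𝔭)
      have hint : IsIntegral (𝓞 K) β := by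
        apply isIntegral_of_smul_mem_submodule N hN_ne hN_fg β
        rintro nn ⟨t, ht, rfl⟩
        obtain ⟨y, hy𝔭, hyeq⟩ := hy t ht
        refine ⟨y, hy𝔭, ?_⟩
        rw [smul_eq_mul]
        exact hyeq.symm
      obtain ⟨y, hy'⟩ := IsIntegrallyClosed.isIntegral_iff.mp hint
      exact ⟨y, hy'.symm⟩
    have hdvd1 : 𝔭 * 𝔠 ∣ 1 * 𝔠 := by
      rw [one_mul]
      exact Ideal.dvd_iff_le.mpr (le_trans key (le_of_eq h𝔠))
    have h1 : 𝔭 ∣ 1 := (mul_dvd_mul_iff_right h𝔠ne).mp hdvd1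
    exact h𝔭.ne_top (Ideal.isUnit_iff.mp (isUnit_of_dvd_one h1))
  -- `𝔭 ^ v` divides `(m - n) 𝔞`
  have hdvd : 𝔭 ^ v ∣ Ideal.span {((m - n : ℤ) : 𝓞 K)} * 𝔞 := by
    rw [Ideal.dvd_iff_le, Ideal.span_singleton_mul_le_iff]
    intro a ha
    obtain ⟨y, hy⟩ := (h𝔞 a).mp ha
    have h1 : ((m : 𝓞 K) * a + y) ∈ 𝔭 ^ v := (Ideal.le_of_dvd hm) (hgen m a ha y hy)
    have h2 : ((n : 𝓞 K) * a + y) ∈ 𝔭 ^ v := (Ideal.le_of_dvd hn) (hgen n a ha y hy)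
    have h3 := Ideal.sub_mem _ h1 h2
    have heq : ((m : 𝓞 K) * a + y) - ((n : 𝓞 K) * a + y) = ((m - n : ℤ) : 𝓞 K) * a := by
      push_cast
      ring
    rwa [heq] at h3
  have hdvd2 : 𝔭 ^ v ∣ Ideal.span {((m - n : ℤ) : 𝓞 K)} :=
    hPprime.pow_dvd_of_dvd_mul_right v (fun h => hAnotle (Ideal.le_of_dvd h)) hdvd
  -- conclude by induction
  have main : ∀ (w : ℕ) (c : ℤ), 𝔭 ^ w ∣ Ideal.span {(c : 𝓞 K)} → (p : ℤ) ^ w ∣ c := by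
    intro w
    induction w with
    | zero => intro c _; simp
    | succ w ih =>
      intro c hc
      have hc1 : (c : 𝓞 K) ∈ 𝔭 :=
        Ideal.le_of_dvd (dvd_trans (dvd_pow_self 𝔭 (Nat.succ_ne_zero w)) hc)
          (Ideal.mem_span_singleton_self _)
      obtain ⟨c', rfl⟩ := hlo c hc1
      obtain ⟨q, hq⟩ : 𝔭 ∣ Ideal.span {(p : 𝓞 K)} :=
        Ideal.dvd_iff_le.mpr (by rwa [Ideal.span_le, Set.singleton_subset_iff])
      have hq2 : ¬ 𝔭 ∣ q := fun hd => hunram (by rw [hq, sq]; exact mul_dvd_mul_left 𝔭 hd)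
      have hsp : Ideal.span {(((p : ℤ) * c' : ℤ) : 𝓞 K)} = 𝔭 * (q * Ideal.span {(c' : 𝓞 K)}) := by
        have hcast : (((p : ℤ) * c' : ℤ) : 𝓞 K) = (p : 𝓞 K) * (c' : 𝓞 K) := by push_cast; ring
        rw [hcast, ← Ideal.span_singleton_mul_span_singleton, hq, mul_assoc]
      rw [hsp, pow_succ'] at hc
      have h3 : 𝔭 ^ w ∣ q * Ideal.span {(c' : 𝓞 K)} := (mul_dvd_mul_iff_left h𝔭ne0).mp hc
      have h4 : 𝔭 ^ w ∣ Ideal.span {(c' : 𝓞 K)} := hPprime.pow_dvd_of_dvd_mul_left w hq2 h3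
      rw [pow_succ']
      exact mul_dvd_mul_left _ (ih c' h4)
  exact main v (m - n) hdvd2
end

section
/- Let α be an algebraic number of degree d ≥ 2 with minimal polynomial f ∈ ℤ[t] (up to sign, an irreducible polynomial with f(−α) = 0), leading coefficient A_f, and let 𝔞 be the denominator ideal of (α) in K = ℚ(α). Then for every integer n, Norm((n+α)𝔞)/Norm(𝔞) = |f(n)/A_f|. -/
open NumberField

open Polynomial FractionalIdeal in
open scoped nonZeroDivisors in
theorem stmt_13 (K : Type*) [Field K] [NumberField K] (α : K)
    (hgen : Algebra.adjoin ℚ {α} = ⊤)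
    (d : ℕ) (hd : 2 ≤ d)
    (f : Polynomial ℤ) (hf : Irreducible f) (hdeg : f.natDegree = d)
    (hroot : Polynomial.aeval (-α) f = 0)
    (𝔞 : Ideal (𝓞 K))
    (h𝔞 : ∀ x : 𝓞 K, x ∈ 𝔞 ↔ ∃ y : 𝓞 K, (x : K) * α = (y : K))
    (J : ℤ → Ideal (𝓞 K))
    (hJ : ∀ n : ℤ, J n = Ideal.span {x : 𝓞 K | ∃ a ∈ 𝔞, (x : K) = ((n : K) + α) * (a : K)})
    (n : ℤ) :
    (Ideal.absNorm (J n) : ℝ) / (Ideal.absNorm 𝔞 : ℝ)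
      = |((f.eval n : ℤ) : ℝ) / ((f.leadingCoeff : ℤ) : ℝ)| := by
  classical
  set γ : K := (n : K) + α with hγdef
  set β : K := -α with hβdef
  -- basic facts about f
  have hfne : f ≠ 0 := hf.ne_zero
  have hAne : f.leadingCoeff ≠ 0 := fun h => hfne (Polynomial.leadingCoeff_eq_zero.mp h)
  have hAneQ : (f.leadingCoeff : ℚ) ≠ 0 := Int.cast_ne_zero.mpr hAne
  have hprim : f.IsPrimitive := by
    rw [Polynomial.isPrimitive_iff_isUnit_of_C_dvd]
    intro r hr
    obtain ⟨g, hg⟩ := hr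
    rcases hf.isUnit_or_isUnit hg with h | h
    · exact Polynomial.isUnit_C.mp h
    · exfalso
      have hg0 : g.natDegree = 0 := Polynomial.natDegree_eq_zero_of_isUnit h
      have : f.natDegree ≤ 0 := by
        calc f.natDegree ≤ (Polynomial.C r).natDegree + g.natDegree := hg ▸ Polynomial.natDegree_mul_le
        _ = 0 := by simp [hg0]
      omega
  set fQ : Polynomial ℚ := f.map (Int.castRingHom ℚ) with hfQdef
  have hfQirr : Irreducible fQ :=
    (Polynomial.IsPrimitive.Int.irreducible_iff_irreducible_map_cast hprim).mp hf
  have hβint : IsIntegral ℚ β := IsIntegral.of_finite ℚ β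
  set m : Polynomial ℚ := minpoly ℚ β with hmdef
  have hmroot : Polynomial.aeval β fQ = 0 := by
    rw [hfQdef]
    rw [show (Int.castRingHom ℚ) = algebraMap ℤ ℚ from rfl, Polynomial.aeval_map_algebraMap]
    exact hroot
  have hmdvd : m ∣ fQ := minpoly.dvd ℚ β hmroot
  have hmmonic : m.Monic := minpoly.monic hβint
  have hmirr : Irreducible m := minpoly.irreducible hβint
  have hassoc : Associated m fQ := hmirr.associated_of_dvd hfQirr hmdvd
  have hmne : m ≠ 0 := hmmonic.ne_zero
  have hfQeq : fQ = Polynomial.C fQ.leadingCoeff * m :=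
    Polynomial.eq_leadingCoeff_mul_of_monic_of_dvd_of_natDegree_le hmmonic hmdvd
      (Polynomial.natDegree_le_of_dvd hassoc.symm.dvd hmne)
  have hfQlc : fQ.leadingCoeff = (f.leadingCoeff : ℚ) := by
    rw [hfQdef, Polynomial.leadingCoeff_map_of_injective (Int.castRingHom ℚ).injective_int f]
    rfl
  have hfQdeg : fQ.natDegree = d := by
    rw [hfQdef, Polynomial.natDegree_map_eq_of_injective
      (Int.castRingHom ℚ).injective_int f, hdeg]
  have hmdeg : m.natDegree = d := by
    have := hfQdeg
    rwa [hfQeq, Polynomial.natDegree_C_mul (hfQlc ▸ hAneQ)] at this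
  -- evaluation identity
  have heval : ((f.eval n : ℤ) : ℚ) = (f.leadingCoeff : ℚ) * m.eval (n : ℚ) := by
    have h1 : fQ.eval ((n : ℤ) : ℚ) = ((f.eval n : ℤ) : ℚ) := by
      rw [hfQdef, Polynomial.eval_map,
        show ((n : ℤ) : ℚ) = (Int.castRingHom ℚ) n from rfl, Polynomial.eval₂_at_apply]
      rfl
    rw [← h1, hfQeq]
    simp [hfQlc]
  -- γ and β generate K
  have hβgen : Algebra.adjoin ℚ {β} = ⊤ := by
    rw [eq_top_iff, ← hgen]
    apply Algebra.adjoin_le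
    rw [Set.singleton_subset_iff]
    have hmem : β ∈ Algebra.adjoin ℚ {β} := Algebra.subset_adjoin rfl
    have : α = -β := by rw [hβdef]; ring
    rw [SetLike.mem_coe, this]
    exact neg_mem hmem
  have hγgen : Algebra.adjoin ℚ {γ} = ⊤ := by
    rw [eq_top_iff, ← hgen]
    apply Algebra.adjoin_le
    rw [Set.singleton_subset_iff]
    have hmem : γ ∈ Algebra.adjoin ℚ {γ} := Algebra.subset_adjoin rfl
    have : α = γ - (n : K) := by rw [hγdef]; ring
    rw [SetLike.mem_coe, this]
    exact sub_mem hmem (intCast_mem _ n)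
  have hγint : IsIntegral ℚ γ := IsIntegral.of_finite ℚ γ
  -- finrank = natDegree m
  have hfinrank : Module.finrank ℚ K = d := by
    let e : Algebra.adjoin ℚ {β} ≃ₐ[ℚ] K :=
      (Subalgebra.equivOfEq _ _ hβgen).trans Subalgebra.topEquiv
    let pb := (Algebra.adjoin.powerBasis hβint).map e
    rw [pb.finrank, show pb.dim = (minpoly ℚ β).natDegree from rfl, ← hmdef, hmdeg]
  -- minpoly of γ
  have hCX : (Polynomial.C (n : ℚ) - Polynomial.X)
      = -(Polynomial.X - Polynomial.C (n : ℚ)) := by ring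
  have hdegCX : (Polynomial.C (n : ℚ) - Polynomial.X).natDegree = 1 := by
    rw [hCX, Polynomial.natDegree_neg, Polynomial.natDegree_X_sub_C]
  have hlcCX : (Polynomial.C (n : ℚ) - Polynomial.X).leadingCoeff = -1 := by
    rw [hCX, Polynomial.leadingCoeff_neg, (Polynomial.monic_X_sub_C _).leadingCoeff]
  set q : Polynomial ℚ := m.comp (Polynomial.C (n : ℚ) - Polynomial.X) with hqdef
  set p : Polynomial ℚ := Polynomial.C ((-1 : ℚ) ^ d) * q with hpdef
  have hqlc : q.leadingCoeff = (-1 : ℚ) ^ d := by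
    rw [hqdef, Polynomial.leadingCoeff_comp (by rw [hdegCX]; omega), hmmonic.leadingCoeff,
      hlcCX, hmdeg, one_mul]
  have hqdeg : q.natDegree = d := by
    rw [hqdef, Polynomial.natDegree_comp, hdegCX, hmdeg, mul_one]
  have hpmonic : p.Monic := by
    have : p.leadingCoeff = 1 := by
      rw [hpdef, Polynomial.leadingCoeff_mul, Polynomial.leadingCoeff_C, hqlc,
        ← pow_add, ← two_mul, pow_mul]
      norm_num
    exact this
  have hpdeg : p.natDegree = d := by
    rw [hpdef, Polynomial.natDegree_C_mul (by positivity : ((-1:ℚ)^d) ≠ 0), hqdeg]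
  have hproot : Polynomial.aeval γ p = 0 := by
    rw [hpdef, _root_.map_mul, hqdef, Polynomial.aeval_comp]
    have : Polynomial.aeval γ (Polynomial.C (n : ℚ) - Polynomial.X) = β := by
      rw [map_sub, Polynomial.aeval_C, Polynomial.aeval_X, hγdef, hβdef,
        map_intCast (algebraMap ℚ K) n]
      ring
    rw [this, hmdef, minpoly.aeval]
    ring
  have hminγ : minpoly ℚ γ = p := by
    have hdvd : minpoly ℚ γ ∣ p := minpoly.dvd ℚ γ hproot
    have hdegγ : (minpoly ℚ γ).natDegree = d := by
      let e : Algebra.adjoin ℚ {γ} ≃ₐ[ℚ] K :=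
        (Subalgebra.equivOfEq _ _ hγgen).trans Subalgebra.topEquiv
      let pb := (Algebra.adjoin.powerBasis hγint).map e
      have := pb.finrank
      rw [hfinrank] at this
      rw [show pb.dim = (minpoly ℚ γ).natDegree from Algebra.adjoin.powerBasis_dim hγint] at this
      omega
    exact (Polynomial.eq_of_monic_of_dvd_of_natDegree_le (minpoly.monic hγint) hpmonic hdvd
      (by rw [hpdeg, hdegγ])).symm
  -- the norm of γ
  have hnorm : Algebra.norm ℚ γ = m.eval (n : ℚ) := by
    let e : Algebra.adjoin ℚ {γ} ≃ₐ[ℚ] K :=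
      (Subalgebra.equivOfEq _ _ hγgen).trans Subalgebra.topEquiv
    let pb := (Algebra.adjoin.powerBasis hγint).map e
    have hgen' : pb.gen = γ := rfl
    have hdim : pb.dim = d := by
      rw [show pb.dim = (minpoly ℚ γ).natDegree from Algebra.adjoin.powerBasis_dim hγint,
        hminγ, hpdeg]
    have := Algebra.PowerBasis.norm_gen_eq_coeff_zero_minpoly pb
    rw [hgen', hdim, hminγ] at this
    rw [this, Polynomial.coeff_zero_eq_eval_zero, hpdef, hqdef]
    simp only [Polynomial.eval_mul, Polynomial.eval_C, Polynomial.eval_comp,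
      Polynomial.eval_sub, Polynomial.eval_X, sub_zero]
    rw [← mul_assoc, ← mul_pow]
    norm_num
  -- fractional ideal identity
  have hinteg : ∀ a : 𝓞 K, a ∈ 𝔞 → ∃ x : 𝓞 K, (x : K) = γ * (a : K) := by
    intro a ha
    obtain ⟨y, hy⟩ := (h𝔞 a).mp ha
    refine ⟨(n : 𝓞 K) * a + y, ?_⟩
    have hc : ((((n : 𝓞 K) * a + y : 𝓞 K)) : K) = (n : K) * (a : K) + (y : K) := by
      simp only [_root_.map_add, _root_.map_mul, _root_.map_intCast]
    rw [hc, ← hy, hγdef]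
    ring
  have key : ((J n : Ideal (𝓞 K)) : FractionalIdeal (𝓞 K)⁰ K)
      = spanSingleton (𝓞 K)⁰ γ * (𝔞 : FractionalIdeal (𝓞 K)⁰ K) := by
    apply le_antisymm
    · rw [hJ n]
      intro x hx
      obtain ⟨x', hx', rfl⟩ := (mem_coeIdeal _).mp hx
      refine Submodule.span_induction ?_ ?_ ?_ ?_ hx'
      · intro s hs
        obtain ⟨a, ha, hsa⟩ := hs
        refine mem_singleton_mul.mpr ⟨algebraMap (𝓞 K) K a, ?_, ?_⟩
        · exact (mem_coeIdeal _).mpr ⟨a, ha, rfl⟩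
        · exact hsa
      · exact FractionalIdeal.zero_mem _
      · intro y z _ _ hy hz
        rw [_root_.map_add]
        exact (spanSingleton (𝓞 K)⁰ γ * (𝔞 : FractionalIdeal (𝓞 K)⁰ K)).coeToSubmodule.add_mem hy hz
      · intro c y _ hy
        rw [smul_eq_mul, _root_.map_mul, ← Algebra.smul_def]
        exact Submodule.smul_mem
          ((spanSingleton (𝓞 K)⁰ γ * (𝔞 : FractionalIdeal (𝓞 K)⁰ K) :
            FractionalIdeal (𝓞 K)⁰ K) : Submodule (𝓞 K) K) c hy
    · intro y hy
      obtain ⟨y', hy', rfl⟩ := mem_singleton_mul.mp hy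
      obtain ⟨a, ha, rfl⟩ := (mem_coeIdeal _).mp hy'
      obtain ⟨x, hx⟩ := hinteg a ha
      refine (mem_coeIdeal _).mpr ⟨x, ?_, hx⟩
      rw [hJ n]
      exact Ideal.subset_span ⟨a, ha, hx⟩
  -- 𝔞 is nonzero
  have h𝔞ne : 𝔞 ≠ ⊥ := by
    obtain ⟨b, r, hr⟩ := IsLocalization.exists_integer_multiple (𝓞 K)⁰ α
    intro hbot
    have hb : (b : 𝓞 K) ∈ 𝔞 := by
      rw [h𝔞]
      refine ⟨r, ?_⟩
      have h1 : ((b : 𝓞 K) : K) * α = (b : 𝓞 K) • α := (Algebra.smul_def _ _).symm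
      rw [h1, ← hr]
    rw [hbot, Ideal.mem_bot] at hb
    exact nonZeroDivisors.coe_ne_zero b hb
  have hN𝔞 : Ideal.absNorm 𝔞 ≠ 0 := fun h => h𝔞ne (Ideal.absNorm_eq_zero_iff.mp h)
  -- norm computation over ℚ
  have hQ : (Ideal.absNorm (J n) : ℚ) = |Algebra.norm ℚ γ| * (Ideal.absNorm 𝔞 : ℚ) := by
    rw [← coeIdeal_absNorm (K := K) (J n), key, _root_.map_mul,
      absNorm_span_singleton (𝓞 K), coeIdeal_absNorm]
  -- conclude
  have hR : (Ideal.absNorm (J n) : ℝ) = |((m.eval (n : ℚ) : ℚ) : ℝ)| * (Ideal.absNorm 𝔞 : ℝ) := by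
    rw [hnorm] at hQ
    exact_mod_cast congrArg (fun x : ℚ => (x : ℝ)) hQ
  rw [div_eq_iff (by exact_mod_cast hN𝔞 : (Ideal.absNorm 𝔞 : ℝ) ≠ 0), hR]
  congr 1
  rw [show ((f.eval n : ℤ) : ℝ) = ((((f.eval n : ℤ) : ℚ)) : ℝ) by push_cast; ring, heval]
  push_cast
  rw [mul_comm, mul_div_assoc, div_self (by exact_mod_cast hAneQ), mul_one]
end
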